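/- Let 0 < r < 1/(4e), c(κ) ∈ (0, e^{-1}) with log c(κ) ≤ −1 − 2κ for some κ > 0, δ'_p = ⌊(p−2)c(κ)/(2|log r|)⌋ − 2, and 0 < β < 1. Then (1/(p-2)!) ∫_0^{2δ'_p β |log r|} u^{p-2} e^{-u} du = O(e^{-2κp}) as p → ∞; more precisely this quantity is at most C √p · c(κ)β · e^{(p-2)(log(c(κ)β) − c(κ)β + 1)} and log(c(κ)β) − c(κ)β + 1 ≤ −2κ. -/

import Mathlib

/-- `δ'_p = ⌊(p−2)c/(2|log r|)⌋ − 2`, as an integer. -/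
noncomputable def δp' (r c : ℝ) (p : ℕ) : ℤ :=
  ⌊((p : ℝ) - 2) * c / (2 * |Real.log r|)⌋ - 2

open Real
set_option maxHeartbeats 1000000

lemma aux_pow_self_le (n : ℕ) : (n : ℝ) ^ n ≤ Real.exp n * n.factorial := by
  have h := Real.pow_div_factorial_le_exp (x := (n:ℝ)) (Nat.cast_nonneg n) n
  rw [div_le_iff₀ (by positivity)] at h
  linarith

lemma aux_mono (m : ℕ) (hm : 1 ≤ m) {s t : ℝ} (hs : 0 ≤ s) (hst : s ≤ t) (htm : t ≤ (m:ℝ)) :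
    s ^ m * Real.exp (-s) ≤ t ^ m * Real.exp (-t) := by
  rcases eq_or_lt_of_le hs with rfl | hs0
  · rw [zero_pow (by omega : m ≠ 0), zero_mul]
    positivity
  · have ht0 : 0 < t := lt_of_lt_of_le hs0 hst
    have hlog : Real.log s - Real.log t ≤ s / t - 1 := by
      rw [← Real.log_div (ne_of_gt hs0) (ne_of_gt ht0)]
      exact Real.log_le_sub_one_of_pos (div_pos hs0 ht0)
    have key : (m:ℝ) * Real.log s - s ≤ (m:ℝ) * Real.log t - t := by
      have h1 : (m:ℝ) * (Real.log s - Real.log t) ≤ (m:ℝ) * (s/t - 1) :=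
        mul_le_mul_of_nonneg_left hlog (Nat.cast_nonneg m)
      have h2 : (m:ℝ) * (s/t - 1) ≤ s - t := by
        have heq : (m:ℝ) * (s/t - 1) = (m:ℝ) * (s - t) / t := by
          field_simp
        rw [heq, div_le_iff₀ ht0]
        nlinarith
      rw [mul_sub] at h1
      linarith
    have e1 : s ^ m * Real.exp (-s) = Real.exp ((m:ℝ) * Real.log s - s) := by
      rw [sub_eq_add_neg, Real.exp_add, ← Real.log_pow, Real.exp_log (pow_pos hs0 m)]
    have e2 : t ^ m * Real.exp (-t) = Real.exp ((m:ℝ) * Real.log t - t) := by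
      rw [sub_eq_add_neg, Real.exp_add, ← Real.log_pow, Real.exp_log (pow_pos ht0 m)]
    rw [e1, e2]
    exact Real.exp_le_exp.2 key

lemma aux_pointwise (m : ℕ) (hm : 1 ≤ m) {a T u : ℝ} (ha0 : 0 < a) (ha1 : a < 1)
    (hTam : T ≤ a * m) (hu0 : 0 ≤ u) (huT : u ≤ T) :
    u ^ m * Real.exp (-u) ≤ T ^ m * Real.exp (-T) * Real.exp ((1-a)*(u-T)) := by
  rcases eq_or_lt_of_le hu0 with rfl | hu0'
  · rw [zero_pow (by omega : m ≠ 0), zero_mul]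
    positivity
  · have hT0 : 0 < T := lt_of_lt_of_le hu0' huT
    have hlog : Real.log u - Real.log T ≤ u / T - 1 := by
      rw [← Real.log_div (ne_of_gt hu0') (ne_of_gt hT0)]
      exact Real.log_le_sub_one_of_pos (div_pos hu0' hT0)
    have key : (m:ℝ) * Real.log u - u ≤ (m:ℝ) * Real.log T - T + (1-a)*(u-T) := by
      have h1 : (m:ℝ) * (Real.log u - Real.log T) ≤ (m:ℝ) * (u/T - 1) :=
        mul_le_mul_of_nonneg_left hlog (Nat.cast_nonneg m)
      have h2 : (m:ℝ) * (u/T - 1) ≤ (2-a) * (u - T) := by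
        have heq : (m:ℝ) * (u/T - 1) = (m:ℝ) * (u - T) / T := by
          field_simp
        rw [heq, div_le_iff₀ hT0]
        have hm' : (1:ℝ) ≤ (m:ℝ) := by exact_mod_cast hm
        nlinarith [sq_nonneg (1-a), mul_nonneg (sub_nonneg.2 huT) (sq_nonneg (1-a)),
          mul_nonneg (sub_nonneg.2 huT) (Nat.cast_nonneg (α := ℝ) m)]
      rw [mul_sub] at h1
      linarith
    have e1 : u ^ m * Real.exp (-u) = Real.exp ((m:ℝ) * Real.log u - u) := by
      rw [sub_eq_add_neg, Real.exp_add, ← Real.log_pow, Real.exp_log (pow_pos hu0' m)]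
    have e2a : T ^ m * Real.exp (-T) = Real.exp ((m:ℝ) * Real.log T - T) := by
      rw [sub_eq_add_neg, Real.exp_add, ← Real.log_pow, Real.exp_log (pow_pos hT0 m)]
    have e2 : T ^ m * Real.exp (-T) * Real.exp ((1-a)*(u-T))
        = Real.exp ((m:ℝ) * Real.log T - T + (1-a)*(u-T)) := by
      rw [Real.exp_add, e2a]
    rw [e1, e2]
    exact Real.exp_le_exp.2 key

lemma aux_expint {lam T : ℝ} (hlam : 0 < lam) :
    ∫ u in (0:ℝ)..T, Real.exp (lam*(u-T)) ≤ 1/lam := by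
  have h1 : ∀ u : ℝ, Real.exp (lam*(u-T)) = Real.exp (-(lam*T)) * Real.exp (lam*u) := by
    intro u; rw [← Real.exp_add]; ring_nf
  simp_rw [h1]
  rw [intervalIntegral.integral_const_mul,
    intervalIntegral.integral_comp_mul_left Real.exp (ne_of_gt hlam),
    integral_exp]
  rw [smul_eq_mul, mul_zero, Real.exp_zero]
  have h2 : Real.exp (-(lam*T)) * (lam⁻¹ * (Real.exp (lam*T) - 1))
      = (1 - Real.exp (-(lam*T))) / lam := by
    rw [eq_div_iff (ne_of_gt hlam)]
    have : Real.exp (-(lam*T)) * Real.exp (lam*T) = 1 := by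
      rw [← Real.exp_add, neg_add_cancel, Real.exp_zero]
    field_simp
    nlinarith [this]
  rw [h2, div_le_div_iff₀ hlam hlam, one_mul]
  nlinarith [Real.exp_pos (-(lam*T)), hlam]

lemma aux_core (r κ c β : ℝ) (hr0 : 0 < r) (hr1 : r < 1 / (4 * Real.exp 1))
    (hκ : 0 < κ) (hc0 : 0 < c) (hc1 : c < Real.exp (-1))
    (hclog : Real.log c ≤ -1 - 2 * κ) (hβ0 : 0 < β) (hβ1 : β < 1) :
    ∃ D > 0, ∀ p : ℕ, 2 ≤ p →
      (1 / (Nat.factorial (p - 2) : ℝ)) *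
          ∫ u in (0:ℝ)..(2 * (δp' r c p : ℝ) * β * |Real.log r|),
            u ^ (p - 2) * Real.exp (-u)
        ≤ D * Real.exp (((p : ℝ) - 2) * (Real.log (c * β) - c * β + 1)) := by
  have hexp1 : (2:ℝ) ≤ Real.exp 1 := by
    have := Real.add_one_le_exp 1
    linarith
  have hr1' : r < 1 := by
    have h4e : (1:ℝ) ≤ 4 * Real.exp 1 := by linarith
    have : 1 / (4 * Real.exp 1) ≤ 1 := by
      rw [div_le_one (by linarith)]
      linarith
    linarith
  have hlogr : Real.log r < 0 := Real.log_neg hr0 hr1'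
  set L : ℝ := |Real.log r| with hLdef
  have hL : 0 < L := abs_pos.2 (ne_of_lt hlogr)
  set a : ℝ := c * β with hadef
  have ha0 : 0 < a := mul_pos hc0 hβ0
  have he1 : Real.exp (-1 : ℝ) < 1 := by
    rw [Real.exp_lt_one_iff]; norm_num
  have hac : a < c := by nlinarith
  have ha1 : a < 1 := by nlinarith
  set E : ℝ := Real.log (c * β) - c * β + 1 with hEdef
  have hE2κ : E ≤ -2 * κ := by
    have hlogβ : Real.log β < 0 := Real.log_neg hβ0 hβ1
    have hlm : Real.log (c * β) = Real.log c + Real.log β :=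
      Real.log_mul (ne_of_gt hc0) (ne_of_gt hβ0)
    rw [hEdef, hlm]
    nlinarith
  have hEneg : E < 0 := lt_of_le_of_lt hE2κ (by linarith)
  set M : ℕ := ⌈4 * L / c⌉₊ with hMdef
  set K : ℝ := max 1 (4 * L) with hKdef
  have hK1 : (1:ℝ) ≤ K := le_max_left _ _
  have hK4L : 4 * L ≤ K := le_max_right _ _
  set B : ℝ := 4 * L * K ^ M * Real.exp (4 * L) with hBdef
  have hB : 0 < B := by positivity
  have h1a : (0:ℝ) < 1 - a := by linarith
  refine ⟨1 / (1 - a) + B * Real.exp (-(M:ℝ) * E), by positivity, ?_⟩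
  intro p hp
  set m : ℕ := p - 2 with hmdef
  have hcast : ((p:ℝ) - 2) = ((m:ℕ):ℝ) := by
    rw [hmdef]
    push_cast [Nat.cast_sub hp]
    ring
  set x : ℝ := ((p : ℝ) - 2) * c / (2 * L) with hxdef
  have hx0 : 0 ≤ x := by
    apply div_nonneg _ (by positivity)
    apply mul_nonneg _ hc0.le
    rw [hcast]; positivity
  have hδeq : ((δp' r c p : ℤ):ℝ) = ((⌊x⌋ : ℤ):ℝ) - 2 := by
    rw [δp']
    push_cast
    ring
  set T : ℝ := 2 * ((δp' r c p : ℤ):ℝ) * β * L with hTdef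
  have hfcont : Continuous (fun u : ℝ => u ^ m * Real.exp (-u)) := by fun_prop
  by_cases hδ : 0 ≤ δp' r c p
  · -- good case
    have hfl2 : (2:ℤ) ≤ ⌊x⌋ := by
      have : (0:ℤ) ≤ ⌊x⌋ - 2 := hδ
      omega
    have hx2 : (2:ℝ) ≤ x := by exact_mod_cast Int.le_floor.1 hfl2
    have hpc : 4 * L ≤ ((p:ℝ) - 2) * c := by
      rw [hxdef] at hx2
      rw [le_div_iff₀ (by positivity)] at hx2
      linarith
    have hm1 : 1 ≤ m := by
      have h2p : (2:ℝ) < (p:ℝ) := by nlinarith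
      have : 2 < p := by exact_mod_cast h2p
      omega
    have hδx : ((δp' r c p : ℤ):ℝ) ≤ x - 2 := by
      rw [hδeq]
      linarith [Int.floor_le x]
    have hT0 : 0 ≤ T := by
      rw [hTdef]
      have : (0:ℝ) ≤ ((δp' r c p : ℤ):ℝ) := by exact_mod_cast hδ
      positivity
    have h2xL : 2 * x * β * L = a * (m:ℝ) := by
      rw [hxdef, hadef, ← hcast]
      field_simp
    have hTam : T ≤ a * (m:ℝ) := by
      rw [← h2xL, hTdef]
      nlinarith [mul_pos hβ0 hL]
    have hamm : a * (m:ℝ) ≤ (m:ℝ) := by nlinarith [Nat.cast_nonneg (α := ℝ) m]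
    have hTm : T ≤ (m:ℝ) := hTam.trans hamm
    have hgcont : Continuous (fun u : ℝ => T ^ m * Real.exp (-T) * Real.exp ((1-a)*(u-T))) := by
      fun_prop
    have hmono : (∫ u in (0:ℝ)..T, u ^ m * Real.exp (-u))
        ≤ ∫ u in (0:ℝ)..T, T ^ m * Real.exp (-T) * Real.exp ((1-a)*(u-T)) := by
      apply intervalIntegral.integral_mono_on hT0
        (hfcont.intervalIntegrable 0 T) (hgcont.intervalIntegrable 0 T)
      intro u hu
      exact aux_pointwise m hm1 ha0 ha1 hTam hu.1 hu.2
    have hgval : (∫ u in (0:ℝ)..T, T ^ m * Real.exp (-T) * Real.exp ((1-a)*(u-T)))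
        ≤ T ^ m * Real.exp (-T) * (1 / (1-a)) := by
      rw [intervalIntegral.integral_const_mul]
      apply mul_le_mul_of_nonneg_left (aux_expint (by linarith : (0:ℝ) < 1 - a)) (by positivity)
    have hTmono : T ^ m * Real.exp (-T) ≤ (a * m) ^ m * Real.exp (-(a * m)) :=
      aux_mono m hm1 hT0 hTam hamm
    have hfac : ((m.factorial : ℕ):ℝ) > 0 := by positivity
    have hmm : ((m:ℝ)) ^ m ≤ Real.exp m * m.factorial := aux_pow_self_le m
    have hfinal : (1 / (m.factorial : ℝ)) * ((a * m) ^ m * Real.exp (-(a * m)) * (1 / (1-a)))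
        ≤ (1 / (1 - a)) * Real.exp ((m:ℝ) * E) := by
      have hexpand : Real.exp ((m:ℝ) * E) = a ^ m * Real.exp m * Real.exp (-(a*m)) := by
        rw [hEdef, ← hadef]
        have hlog : a ^ m = Real.exp ((m:ℝ) * Real.log a) := by
          rw [← Real.log_pow, Real.exp_log (pow_pos ha0 m)]
        rw [hlog, ← Real.exp_add, ← Real.exp_add]
        ring_nf
      rw [hexpand, mul_pow]
      have h1 : a ^ m * (m:ℝ) ^ m ≤ a ^ m * (Real.exp m * m.factorial) :=
        mul_le_mul_of_nonneg_left hmm (by positivity)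
      rw [div_mul_eq_mul_div, one_mul, div_le_iff₀ hfac]
      have hrest : (0:ℝ) < Real.exp (-(a*m)) * (1/(1-a)) := by positivity
      calc a ^ m * (m:ℝ) ^ m * Real.exp (-(a * m)) * (1 / (1 - a))
          ≤ a ^ m * (Real.exp m * m.factorial) * Real.exp (-(a * m)) * (1 / (1 - a)) := by
            apply mul_le_mul_of_nonneg_right _ (by positivity)
            exact mul_le_mul_of_nonneg_right h1 (by positivity)
        _ = 1 / (1 - a) * (a ^ m * Real.exp ↑m * Real.exp (-(a * ↑m))) * ↑m.factorial := by
            ring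
    have hDge : (1:ℝ) / (1-a) ≤ 1 / (1 - a) + B * Real.exp (-(M:ℝ) * E) := by
      nlinarith [mul_pos hB (Real.exp_pos (-(M:ℝ) * E))]
    calc (1 / (m.factorial : ℝ)) * ∫ u in (0:ℝ)..T, u ^ m * Real.exp (-u)
        ≤ (1 / (m.factorial : ℝ)) * (T ^ m * Real.exp (-T) * (1 / (1-a))) := by
          apply mul_le_mul_of_nonneg_left (hmono.trans hgval) (by positivity)
      _ ≤ (1 / (m.factorial : ℝ)) * ((a * m) ^ m * Real.exp (-(a * m)) * (1 / (1-a))) := by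
          apply mul_le_mul_of_nonneg_left _ (by positivity)
          apply mul_le_mul_of_nonneg_right hTmono (by positivity)
      _ ≤ (1 / (1 - a)) * Real.exp ((m:ℝ) * E) := hfinal
      _ ≤ (1 / (1 - a) + B * Real.exp (-(M:ℝ) * E)) * Real.exp (((p:ℝ) - 2) * E) := by
          rw [hcast]
          exact mul_le_mul_of_nonneg_right hDge (Real.exp_pos _).le
  · -- bad case
    push_neg at hδ
    have hfl0 : (0:ℤ) ≤ ⌊x⌋ := Int.floor_nonneg.2 hx0
    have hδge : (-2:ℤ) ≤ δp' r c p := by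
      have : δp' r c p = ⌊x⌋ - 2 := by rw [δp']
      omega
    have hδr : (-2:ℝ) ≤ ((δp' r c p : ℤ):ℝ) := by exact_mod_cast hδge
    have hδr' : ((δp' r c p : ℤ):ℝ) < 0 := by exact_mod_cast hδ
    have hTle : -(4 * L) ≤ T ∧ T ≤ 0 := by
      constructor
      · rw [hTdef]
        nlinarith [mul_pos hβ0 hL, mul_pos hc0 hβ0]
      · rw [hTdef]
        nlinarith [mul_pos hβ0 hL]
    -- m ≤ M
    have hfl1 : ⌊x⌋ ≤ 1 := by
      have : δp' r c p = ⌊x⌋ - 2 := by rw [δp']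
      omega
    have hxlt2 : x < 2 := by
      have := Int.lt_floor_add_one x
      have h1 : ((⌊x⌋:ℤ):ℝ) ≤ 1 := by exact_mod_cast hfl1
      linarith
    have hmM : m ≤ M := by
      have h1 : ((p:ℝ) - 2) * c < 4 * L := by
        rw [hxdef, div_lt_iff₀ (by positivity)] at hxlt2
        linarith
      have h2 : (m:ℝ) ≤ (M:ℝ) := by
        have h3 : (m:ℝ) < 4 * L / c := by
          rw [lt_div_iff₀ hc0, ← hcast]
          linarith
        exact le_trans h3.le (by rw [hMdef]; exact Nat.le_ceil _)
      exact_mod_cast h2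
    have hbound : ∀ u ∈ Set.uIoc (0:ℝ) T, ‖u ^ m * Real.exp (-u)‖ ≤ K ^ m * Real.exp (4 * L) := by
      intro u hu
      rcases Set.mem_uIoc.1 hu with ⟨h1, h2⟩ | ⟨h1, h2⟩
      · linarith [hTle.2]
      · have huabs : |u| ≤ 4 * L := by
          rw [abs_le]
          constructor <;> linarith [hTle.1]
        have hnu : -u ≤ 4 * L := by
          have := hTle.1
          linarith
        rw [norm_mul, norm_pow, Real.norm_eq_abs, Real.norm_eq_abs,
          abs_of_pos (Real.exp_pos _)]
        apply mul_le_mul _ (Real.exp_le_exp.2 hnu) (Real.exp_pos _).le (by positivity)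
        exact pow_le_pow_left₀ (abs_nonneg u) (huabs.trans hK4L) m
    have hnorm : ‖∫ u in (0:ℝ)..T, u ^ m * Real.exp (-u)‖
        ≤ K ^ m * Real.exp (4 * L) * |T - 0| :=
      intervalIntegral.norm_integral_le_of_norm_le_const hbound
    have hTabs : |T - 0| ≤ 4 * L := by
      rw [sub_zero, abs_le]
      exact ⟨hTle.1, hTle.2.trans (by positivity)⟩
    have hint_le : (∫ u in (0:ℝ)..T, u ^ m * Real.exp (-u)) ≤ B := by
      have h1 : (∫ u in (0:ℝ)..T, u ^ m * Real.exp (-u))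
          ≤ ‖∫ u in (0:ℝ)..T, u ^ m * Real.exp (-u)‖ := le_abs_self _
      have h2 : K ^ m * Real.exp (4*L) * |T - 0| ≤ K ^ M * Real.exp (4*L) * (4*L) := by
        apply mul_le_mul _ hTabs (abs_nonneg _) (by positivity)
        exact mul_le_mul_of_nonneg_right (pow_le_pow_right₀ hK1 hmM) (Real.exp_pos _).le
      rw [hBdef]
      calc (∫ u in (0:ℝ)..T, u ^ m * Real.exp (-u)) ≤ _ := h1
        _ ≤ K ^ m * Real.exp (4*L) * |T - 0| := hnorm
        _ ≤ K ^ M * Real.exp (4*L) * (4*L) := h2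
        _ = 4 * L * K ^ M * Real.exp (4*L) := by ring
    have hfac1 : (1:ℝ) ≤ (m.factorial : ℝ) := by exact_mod_cast m.factorial_pos
    have hexpge : (1:ℝ) ≤ Real.exp (-(M:ℝ) * E) * Real.exp ((m:ℝ) * E) := by
      rw [← Real.exp_add, ← Real.exp_zero]
      apply Real.exp_le_exp.2
      have hmc : (m:ℝ) ≤ (M:ℝ) := by exact_mod_cast hmM
      nlinarith
    calc (1 / (m.factorial : ℝ)) * ∫ u in (0:ℝ)..T, u ^ m * Real.exp (-u)
        ≤ (1 / (m.factorial : ℝ)) * ‖∫ u in (0:ℝ)..T, u ^ m * Real.exp (-u)‖ := by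
          apply mul_le_mul_of_nonneg_left (le_abs_self _) (by positivity)
      _ ≤ 1 * ‖∫ u in (0:ℝ)..T, u ^ m * Real.exp (-u)‖ := by
          apply mul_le_mul_of_nonneg_right _ (norm_nonneg _)
          rw [div_le_one (by positivity)]
          exact hfac1
      _ ≤ B := by
          rw [one_mul, hBdef]
          calc ‖∫ u in (0:ℝ)..T, u ^ m * Real.exp (-u)‖
              ≤ K ^ m * Real.exp (4*L) * |T - 0| := hnorm
            _ ≤ K ^ M * Real.exp (4*L) * (4*L) := by
                apply mul_le_mul _ hTabs (abs_nonneg _) (by positivity)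
                exact mul_le_mul_of_nonneg_right (pow_le_pow_right₀ hK1 hmM) (Real.exp_pos _).le
            _ = 4 * L * K ^ M * Real.exp (4*L) := by ring
      _ ≤ B * (Real.exp (-(M:ℝ) * E) * Real.exp ((m:ℝ) * E)) :=
          le_mul_of_one_le_right hB.le hexpge
      _ = (B * Real.exp (-(M:ℝ) * E)) * Real.exp ((m:ℝ) * E) := by ring
      _ ≤ (1 / (1 - a) + B * Real.exp (-(M:ℝ) * E)) * Real.exp ((m:ℝ) * E) := by
          apply mul_le_mul_of_nonneg_right _ (Real.exp_pos _).le
          have : (0:ℝ) < 1 / (1-a) := by positivity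
          linarith
      _ = (1 / (1 - a) + B * Real.exp (-(M:ℝ) * E)) * Real.exp (((p:ℝ) - 2) * E) := by
          rw [hcast]

/-- Refined incomplete-Gamma estimate (3.9): with `log c(κ) ≤ −1−2κ` and
`δ'_p = ⌊(p−2)c(κ)/(2|log r|)⌋ − 2`,
`(1/(p-2)!) ∫_0^{2δ'_pβ|log r|} u^{p-2}e^{-u} du = O(e^{-2κp})`; more precisely this is at
most `C√p·c(κ)β·e^{(p-2)(log(c(κ)β)−c(κ)β+1)}` and `log(c(κ)β)−c(κ)β+1 ≤ −2κ`. -/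
theorem stmt18 (r κ c β : ℝ) (hr0 : 0 < r) (hr1 : r < 1 / (4 * Real.exp 1))
    (hκ : 0 < κ) (hc0 : 0 < c) (hc1 : c < Real.exp (-1))
    (hclog : Real.log c ≤ -1 - 2 * κ) (hβ0 : 0 < β) (hβ1 : β < 1) :
    Real.log (c * β) - c * β + 1 ≤ -2 * κ ∧
    (∃ C > 0, ∀ p : ℕ, 2 ≤ p →
      (1 / (Nat.factorial (p - 2) : ℝ)) *
          ∫ u in (0:ℝ)..(2 * (δp' r c p : ℝ) * β * |Real.log r|),
            u ^ (p - 2) * Real.exp (-u)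
        ≤ C * Real.sqrt p * (c * β) *
            Real.exp (((p : ℝ) - 2) * (Real.log (c * β) - c * β + 1))) ∧
    (∃ C > 0, ∀ p : ℕ, 2 ≤ p →
      (1 / (Nat.factorial (p - 2) : ℝ)) *
          ∫ u in (0:ℝ)..(2 * (δp' r c p : ℝ) * β * |Real.log r|),
            u ^ (p - 2) * Real.exp (-u)
        ≤ C * Real.exp (-2 * κ * p)) := by
  obtain ⟨D, hD, hcore⟩ := aux_core r κ c β hr0 hr1 hκ hc0 hc1 hclog hβ0 hβ1
  have ha0 : 0 < c * β := mul_pos hc0 hβ0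
  have hE2κ : Real.log (c * β) - c * β + 1 ≤ -2 * κ := by
    have hlogβ : Real.log β < 0 := Real.log_neg hβ0 hβ1
    have hlm : Real.log (c * β) = Real.log c + Real.log β :=
      Real.log_mul (ne_of_gt hc0) (ne_of_gt hβ0)
    rw [hlm]
    nlinarith
  refine ⟨hE2κ, ⟨D / (c * β), by positivity, ?_⟩, ⟨D * Real.exp (4 * κ), by positivity, ?_⟩⟩
  · intro p hp
    have h := hcore p hp
    have hsp : (1:ℝ) ≤ Real.sqrt p := by
      rw [show (1:ℝ) = Real.sqrt 1 from Real.sqrt_one.symm]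
      apply Real.sqrt_le_sqrt
      exact_mod_cast le_trans (by norm_num) hp
    have heq : D / (c * β) * Real.sqrt p * (c * β) = D * Real.sqrt p := by
      field_simp
    have key : D ≤ D / (c * β) * Real.sqrt p * (c * β) := by
      rw [heq]
      nlinarith
    calc (1 / (Nat.factorial (p - 2) : ℝ)) *
          ∫ u in (0:ℝ)..(2 * (δp' r c p : ℝ) * β * |Real.log r|),
            u ^ (p - 2) * Real.exp (-u)
        ≤ D * Real.exp (((p : ℝ) - 2) * (Real.log (c * β) - c * β + 1)) := h
      _ ≤ D / (c * β) * Real.sqrt p * (c * β) *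
            Real.exp (((p : ℝ) - 2) * (Real.log (c * β) - c * β + 1)) :=
          mul_le_mul_of_nonneg_right key (Real.exp_pos _).le
  · intro p hp
    have h := hcore p hp
    have hp2 : (0:ℝ) ≤ (p:ℝ) - 2 := by
      have : (2:ℝ) ≤ (p:ℝ) := by exact_mod_cast hp
      linarith
    have hmul : ((p:ℝ) - 2) * (Real.log (c * β) - c * β + 1) ≤ 4 * κ + -2 * κ * p := by
      have := mul_le_mul_of_nonneg_left hE2κ hp2
      nlinarith
    have hexp : Real.exp (((p:ℝ) - 2) * (Real.log (c * β) - c * β + 1))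
        ≤ Real.exp (4 * κ) * Real.exp (-2 * κ * p) := by
      rw [← Real.exp_add]
      exact Real.exp_le_exp.2 hmul
    calc (1 / (Nat.factorial (p - 2) : ℝ)) *
          ∫ u in (0:ℝ)..(2 * (δp' r c p : ℝ) * β * |Real.log r|),
            u ^ (p - 2) * Real.exp (-u)
        ≤ D * Real.exp (((p : ℝ) - 2) * (Real.log (c * β) - c * β + 1)) := h
      _ ≤ D * (Real.exp (4 * κ) * Real.exp (-2 * κ * p)) :=
          mul_le_mul_of_nonneg_left hexp hD.le
      _ = D * Real.exp (4 * κ) * Real.exp (-2 * κ * p) := by ring
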